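/- Suppose k = iκ with κ > 0 real, and u : (0,∞) → ℝ is a nontrivial real solution of u'' + (1/r)u' - κ^2(1+q(r))u - (n^2/r^2)u = 0 decaying at infinity such that integration by parts is justified. Then r u(r) u'(r) = -∫_r^∞ [x(u'(x))^2 + (κ^2(1+q(x)) + n^2/x^2) x u(x)^2] dx for all r > 0, and hence u(r) ≠ 0 for all r > 0. -/

import Mathlib

set_option maxHeartbeats 1000000 in
open MeasureTheory in
/-- For `k = iκ` with `κ > 0`, a nontrivial real decaying solution `u` of
`u'' + u'/r - κ²(1+q)u - (n²/r²)u = 0` satisfies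
`r u(r) u'(r) = -∫_r^∞ [x u'(x)² + (κ²(1+q)+n²/x²) x u(x)²] dx`, hence `u(r) ≠ 0` for `r > 0`. -/
theorem nonvanishing_imaginary_frequency
    (n : ℕ) (κ : ℝ) (hκ : 0 < κ)
    (q : ℝ → ℝ) (hq : Continuous q) (hq1 : ∀ r, -1 < q r)
    (hqsupp : HasCompactSupport q)
    (u : ℝ → ℝ)
    (hu : ∀ r ∈ Set.Ioi (0:ℝ), DifferentiableAt ℝ u r)
    (hu' : ∀ r ∈ Set.Ioi (0:ℝ), DifferentiableAt ℝ (deriv u) r)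
    (hode : ∀ r ∈ Set.Ioi (0:ℝ),
      deriv (deriv u) r + (1/r)*deriv u r - κ^2*(1+q r)*u r - ((n:ℝ)^2/r^2)*u r = 0)
    (hint : ∀ r > 0, IntegrableOn
      (fun x => x*(deriv u x)^2 + (κ^2*(1+q x) + (n:ℝ)^2/x^2)*x*(u x)^2) (Set.Ioi r))
    (hdecay : Filter.Tendsto (fun r : ℝ => r * u r * deriv u r) Filter.atTop (nhds 0))
    (hnontriv : ∃ r > 0, u r ≠ 0) :
    ∀ r : ℝ, 0 < r →
      r * u r * deriv u r
        = -∫ x in Set.Ioi r, (x*(deriv u x)^2 + (κ^2*(1+q x) + (n:ℝ)^2/x^2)*x*(u x)^2)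
      ∧ u r ≠ 0 := by
  set g : ℝ → ℝ := fun x => x*(deriv u x)^2 + (κ^2*(1+q x) + (n:ℝ)^2/x^2)*x*(u x)^2 with hgdef
  set F : ℝ → ℝ := fun r => r * u r * deriv u r with hFdef
  -- continuity facts
  have hcu : ContinuousOn u (Set.Ioi (0:ℝ)) :=
    fun x hx => (hu x hx).continuousAt.continuousWithinAt
  have hcu' : ContinuousOn (deriv u) (Set.Ioi (0:ℝ)) :=
    fun x hx => (hu' x hx).continuousAt.continuousWithinAt
  have hcc : ContinuousOn (fun x : ℝ => κ^2*(1+q x) + (n:ℝ)^2/x^2) (Set.Ioi (0:ℝ)) := by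
    apply ContinuousOn.add
    · exact (continuous_const.mul (continuous_const.add hq)).continuousOn
    · exact continuousOn_const.div (continuousOn_pow 2)
        (fun x hx => pow_ne_zero _ (ne_of_gt hx))
  have hcg : ContinuousOn g (Set.Ioi (0:ℝ)) := by
    apply ContinuousOn.add
    · exact continuousOn_id.mul (hcu'.pow 2)
    · exact (hcc.mul continuousOn_id).mul (hcu.pow 2)
  -- positivity of the coefficient
  have hcpos : ∀ x : ℝ, 0 < x → 0 < κ^2*(1+q x) + (n:ℝ)^2/x^2 := by
    intro x hx
    have h1 : 0 < 1 + q x := by linarith [hq1 x]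
    have h2 : 0 < κ^2 := by positivity
    have h3 : (0:ℝ) ≤ (n:ℝ)^2/x^2 := by positivity
    nlinarith
  have hgnonneg : ∀ x : ℝ, 0 < x → 0 ≤ g x := by
    intro x hx
    have := hcpos x hx
    have h1 : 0 ≤ x*(deriv u x)^2 := by positivity
    have h2 : 0 ≤ (κ^2*(1+q x) + (n:ℝ)^2/x^2)*x*(u x)^2 := by positivity
    simp only [hgdef]; linarith
  -- F has derivative g on Ioi 0
  have hF : ∀ s ∈ Set.Ioi (0:ℝ), HasDerivAt F (g s) s := by
    intro s hs
    have hs0 : (0:ℝ) < s := hs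
    have h1 : HasDerivAt u (deriv u s) s := (hu s hs).hasDerivAt
    have h2 : HasDerivAt (deriv u) (deriv (deriv u) s) s := (hu' s hs).hasDerivAt
    have h3 : HasDerivAt (fun t : ℝ => t) 1 s := hasDerivAt_id s
    have h4 : HasDerivAt F _ s := ((h3.mul h1).mul h2)
    have huu : deriv (deriv u) s
        = κ^2*(1+q s)*u s + ((n:ℝ)^2/s^2)*u s - (1/s)*deriv u s := by
      linarith [hode s hs]
    convert h4 using 1
    rw [huu]
    simp only [hgdef, Pi.mul_apply]
    field_simp
    ring
  -- the key identity
  have key : ∀ r : ℝ, 0 < r → F r = -∫ x in Set.Ioi r, g x := by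
    intro r hr
    have hFTC : ∀ R : ℝ, r ≤ R → ∫ x in r..R, g x = F R - F r := by
      intro R hR
      apply intervalIntegral.integral_eq_sub_of_hasDerivAt
      · intro x hx
        rw [Set.uIcc_of_le hR] at hx
        exact hF x (lt_of_lt_of_le hr hx.1)
      · apply ContinuousOn.intervalIntegrable
        apply hcg.mono
        rw [Set.uIcc_of_le hR]
        intro x hx
        exact lt_of_lt_of_le hr hx.1
    have hlim1 : Filter.Tendsto (fun R => ∫ x in r..R, g x) Filter.atTop
        (nhds (∫ x in Set.Ioi r, g x)) :=
      intervalIntegral_tendsto_integral_Ioi r (hint r hr) Filter.tendsto_id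
    have hlim2 : Filter.Tendsto (fun R => ∫ x in r..R, g x) Filter.atTop (nhds (0 - F r)) := by
      have heq : (fun R => ∫ x in r..R, g x) =ᶠ[Filter.atTop] (fun R => F R - F r) := by
        filter_upwards [Filter.eventually_ge_atTop r] with R hR
        exact hFTC R hR
      rw [Filter.tendsto_congr' heq]
      exact hdecay.sub tendsto_const_nhds
    have := tendsto_nhds_unique hlim1 hlim2
    rw [this]; ring
  -- vanishing at a point forces vanishing to the right
  have hzero : ∀ r : ℝ, 0 < r → u r = 0 → ∀ x, r < x → u x = 0 ∧ deriv u x = 0 := by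
    intro r hr hur
    have hFr : F r = 0 := by simp [hFdef, hur]
    have hI : ∫ x in Set.Ioi r, g x = 0 := by
      have := key r hr
      rw [hFr] at this
      linarith
    have hnn : 0 ≤ᵐ[volume.restrict (Set.Ioi r)] g :=
      (ae_restrict_iff' measurableSet_Ioi).mpr
        (Filter.Eventually.of_forall (fun x hx => hgnonneg x (lt_trans hr hx)))
    have hae : g =ᵐ[volume.restrict (Set.Ioi r)] 0 :=
      (integral_eq_zero_iff_of_nonneg_ae hnn (hint r hr)).mp hI
    have hnull : volume.restrict (Set.Ioi r) {x | ¬ g x = 0} = 0 := ae_iff.mp hae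
    have hgzero : ∀ x, r < x → g x = 0 := by
      intro x hx
      by_contra hne
      have hxpos : 0 < x := lt_trans hr hx
      have hconti : ContinuousAt g x :=
        (hcg.continuousAt (Ioi_mem_nhds hxpos))
      have : ∀ᶠ y in nhds x, g y ≠ 0 := hconti.eventually_ne hne
      obtain ⟨ε, hε, hball⟩ := Metric.eventually_nhds_iff_ball.mp this
      set δ := min ε (x - r) with hδdef
      have hδ : 0 < δ := lt_min hε (by linarith)
      have hsub1 : Metric.ball x δ ⊆ {y | ¬ g y = 0} := by
        intro y hy
        exact hball y (Metric.ball_subset_ball (min_le_left _ _) hy)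
      have hsub2 : Metric.ball x δ ⊆ Set.Ioi r := by
        intro y hy
        have := abs_lt.mp (by simpa [Real.dist_eq] using hy)
        have : x - δ < y := by linarith [this.1]
        have hδ2 : δ ≤ x - r := min_le_right _ _
        simp only [Set.mem_Ioi]; linarith
      have hle : volume (Metric.ball x δ) ≤ 0 := by
        calc volume (Metric.ball x δ)
            = volume.restrict (Set.Ioi r) (Metric.ball x δ) := by
              rw [Measure.restrict_apply measurableSet_ball,
                Set.inter_eq_self_of_subset_left hsub2]
          _ ≤ volume.restrict (Set.Ioi r) {x | ¬ g x = 0} :=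
              measure_mono hsub1
          _ = 0 := hnull
      have := Metric.measure_ball_pos volume x hδ
      exact (ne_of_gt this) (le_antisymm hle zero_le)
    intro x hx
    have hxpos : 0 < x := lt_trans hr hx
    have hgx := hgzero x hx
    have hc := hcpos x hxpos
    have h1 : 0 ≤ x*(deriv u x)^2 := by positivity
    have h2 : 0 ≤ (κ^2*(1+q x) + (n:ℝ)^2/x^2)*x*(u x)^2 := by positivity
    simp only [hgdef] at hgx
    have hA : x*(deriv u x)^2 = 0 := by linarith
    have hB2 : ((κ^2*(1+q x) + (n:ℝ)^2/x^2)*x)*(u x)^2 = 0 := by linarith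
    have hcx : (κ^2*(1+q x) + (n:ℝ)^2/x^2)*x ≠ 0 := by positivity
    constructor
    · have h5 : (u x)^2 = 0 := (mul_eq_zero.mp hB2).resolve_left hcx
      exact sq_eq_zero_iff.mp h5
    · have h5 : (deriv u x)^2 = 0 := (mul_eq_zero.mp hA).resolve_left (ne_of_gt hxpos)
      exact sq_eq_zero_iff.mp h5
  -- main conclusion
  intro r hr
  refine ⟨key r hr, ?_⟩
  intro hur
  obtain ⟨r1, hr1, hur1⟩ := hnontriv
  have hz := hzero r hr hur
  rcases lt_or_ge r r1 with hlt | hle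
  · exact hur1 (hz r1 hlt).1
  -- energy argument on [r1, r+1]
  set R0 := r + 1 with hR0def
  have hR0 : r < R0 := by rw [hR0def]; linarith
  have huR0 : u R0 = 0 := (hz R0 hR0).1
  have hu'R0 : deriv u R0 = 0 := (hz R0 hR0).2
  set E : ℝ → ℝ := fun s => (deriv u s)^2 + (u s)^2 with hEdef
  have hE : ∀ s ∈ Set.Ioi (0:ℝ),
      HasDerivAt E (2*deriv u s*deriv (deriv u) s + 2*u s*deriv u s) s := by
    intro s hs
    have h1 : HasDerivAt u (deriv u s) s := (hu s hs).hasDerivAt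
    have h2 : HasDerivAt (deriv u) (deriv (deriv u) s) s := (hu' s hs).hasDerivAt
    have : HasDerivAt E _ s := (h2.pow 2).add (h1.pow 2)
    convert this using 1
    ring
  -- bound on the coefficient
  have hr1R0 : r1 < R0 := by linarith
  have hcompact : IsCompact (Set.Icc r1 R0) := isCompact_Icc
  have hsubI : Set.Icc r1 R0 ⊆ Set.Ioi (0:ℝ) := fun x hx => lt_of_lt_of_le hr1 hx.1
  have hccont : ContinuousOn (fun s : ℝ => κ^2*(1+q s) + (n:ℝ)^2/s^2 + 1) (Set.Icc r1 R0) :=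
    ((hcc.mono hsubI).add continuousOn_const)
  obtain ⟨B, hB⟩ := hcompact.exists_bound_of_continuousOn hccont
  set K := 2/r1 + B with hKdef
  set Φ : ℝ → ℝ := fun s => Real.exp (K*s) * E s with hΦdef
  have hΦderiv : ∀ s ∈ Set.Ioo r1 R0, HasDerivAt Φ
      (K * Real.exp (K*s) * E s
        + Real.exp (K*s) * (2*deriv u s*deriv (deriv u) s + 2*u s*deriv u s)) s := by
    intro s hs
    have hspos : (0:ℝ) < s := lt_trans hr1 hs.1
    have hexp : HasDerivAt (fun t : ℝ => Real.exp (K*t)) (K * Real.exp (K*s)) s := by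
      have h0 : HasDerivAt (fun t : ℝ => K*t) K s := by
        simpa using (hasDerivAt_id s).const_mul K
      have := HasDerivAt.exp h0
      simpa [mul_comm] using this
    exact hexp.mul (hE s hspos)
  have hΦmono : MonotoneOn Φ (Set.Icc r1 R0) := by
    apply monotoneOn_of_deriv_nonneg (convex_Icc r1 R0)
    · apply ContinuousOn.mul
      · exact (Real.continuous_exp.comp (continuous_const.mul continuous_id)).continuousOn
      · exact ((hcu'.mono hsubI).pow 2).add ((hcu.mono hsubI).pow 2)
    · rw [interior_Icc]
      intro s hs
      exact (hΦderiv s hs).differentiableAt.differentiableWithinAt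
    · rw [interior_Icc]
      intro s hs
      rw [(hΦderiv s hs).deriv]
      have hspos : (0:ℝ) < s := lt_trans hr1 hs.1
      have huu : deriv (deriv u) s
          = κ^2*(1+q s)*u s + ((n:ℝ)^2/s^2)*u s - (1/s)*deriv u s := by
        linarith [hode s hspos]
      have hBs := hB s ⟨le_of_lt hs.1, le_of_lt hs.2⟩
      rw [Real.norm_eq_abs] at hBs
      have hBs1 : κ^2*(1+q s) + (n:ℝ)^2/s^2 + 1 ≤ B := le_trans (le_abs_self _) hBs
      have hc1pos : 0 < κ^2*(1+q s) + (n:ℝ)^2/s^2 + 1 := by linarith [hcpos s hspos]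
      have hexppos : 0 < Real.exp (K*s) := Real.exp_pos _
      have hdivle : 2/s ≤ 2/r1 := by
        apply div_le_div_of_nonneg_left (by norm_num) hr1 (le_of_lt hs.1)
      -- reduce to: K * E s + E' s ≥ 0
      have hmain : 0 ≤ K * E s + (2*deriv u s*deriv (deriv u) s + 2*u s*deriv u s) := by
        simp only [hEdef, hKdef]
        rw [huu]
        have hs0 : s ≠ 0 := ne_of_gt hspos
        have e1 : 2*deriv u s*(κ^2*(1+q s)*u s + ((n:ℝ)^2/s^2)*u s - (1/s)*deriv u s)
            + 2*u s*deriv u s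
            = -(2/s)*(deriv u s)^2 + 2*(κ^2*(1+q s) + (n:ℝ)^2/s^2 + 1)*(u s * deriv u s) := by
          field_simp
          ring
        rw [e1]
        nlinarith [mul_nonneg hc1pos.le (sq_nonneg (u s + deriv u s)),
          mul_le_mul_of_nonneg_right hBs1
            (add_nonneg (sq_nonneg (u s)) (sq_nonneg (deriv u s))),
          mul_le_mul_of_nonneg_right hdivle (sq_nonneg (deriv u s)),
          mul_nonneg (by positivity : (0:ℝ) ≤ 2/r1) (sq_nonneg (u s)),
          sq_nonneg (u s), sq_nonneg (deriv u s)]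
      calc (0:ℝ) = Real.exp (K*s) * 0 := by ring
        _ ≤ Real.exp (K*s) * (K * E s + (2*deriv u s*deriv (deriv u) s + 2*u s*deriv u s)) :=
            mul_le_mul_of_nonneg_left hmain (le_of_lt hexppos)
        _ = K * Real.exp (K*s) * E s
            + Real.exp (K*s) * (2*deriv u s*deriv (deriv u) s + 2*u s*deriv u s) := by ring
  have hΦR0 : Φ R0 = 0 := by
    simp [hΦdef, hEdef, huR0, hu'R0]
  have hle2 : Φ r1 ≤ Φ R0 :=
    hΦmono ⟨le_refl r1, le_of_lt hr1R0⟩ ⟨le_of_lt hr1R0, le_refl R0⟩ (le_of_lt hr1R0)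
  have hpos : 0 < Φ r1 := by
    have h1 : 0 < E r1 := by
      have : 0 < (u r1)^2 := by positivity
      have : 0 ≤ (deriv u r1)^2 := sq_nonneg _
      simp only [hEdef]; linarith
    have : 0 < Real.exp (K*r1) := Real.exp_pos _
    positivity
  rw [hΦR0] at hle2
  linarith
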